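/- Let b > 0 and let φ be a twice differentiable real function defined on an interval containing [−b, b]. Suppose that at a point s ∈ (−b, b) one has φ(s) − s·φ'(s) + (b² − s²)·φ''(s) > 0 and φ(−s) + s·φ'(−s) + (b² − s²)·φ''(−s) > 0, that 𝓕_b(s) = 0, and that φ'(s) ≠ 0. Then φ'(−s) ≠ 0 and φ'(s)·(−φ'(−s)) > 0; that is, φ and the reversed function φ̄(s) := φ(−s) have derivatives of the same sign at s. -/
import Mathlib


/-- `𝓕_b(s) := (b² - s²)·(φ'(s)·φ''(-s) + φ'(-s)·φ''(s)) + (φ(-s)·φ'(s) + φ(s)·φ'(-s))`. -/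
noncomputable def calF (φ : ℝ → ℝ) (b s : ℝ) : ℝ :=
  (b ^ 2 - s ^ 2) * (deriv φ s * deriv (deriv φ) (-s) + deriv φ (-s) * deriv (deriv φ) s)
    + (φ (-s) * deriv φ s + φ s * deriv φ (-s))

/-- If at a point `s ∈ (-b, b)` both Finsler-type expressions for `φ`
and its reverse are positive, `𝓕_b(s) = 0`, and `φ'(s) ≠ 0`, then `φ'(-s) ≠ 0` and
`φ'(s)·(-φ'(-s)) > 0`, i.e. `φ` and `φ̄(s) = φ(-s)` have derivatives of the same sign. -/
theorem same_sign_derivatives_of_calF_eq_zero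
    (b : ℝ) (hb : 0 < b) (φ : ℝ → ℝ)
    (hd1 : ∀ x ∈ Set.Icc (-b) b, DifferentiableAt ℝ φ x)
    (hd2 : ∀ x ∈ Set.Icc (-b) b, DifferentiableAt ℝ (deriv φ) x)
    (s : ℝ) (hs : s ∈ Set.Ioo (-b) b)
    (hB : 0 < φ s - s * deriv φ s + (b ^ 2 - s ^ 2) * deriv (deriv φ) s)
    (hA : 0 < φ (-s) + s * deriv φ (-s) + (b ^ 2 - s ^ 2) * deriv (deriv φ) (-s))
    (hF : calF φ b s = 0)
    (hφ' : deriv φ s ≠ 0) :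
    deriv φ (-s) ≠ 0 ∧ 0 < deriv φ s * (-(deriv φ (-s))) := by
  set u := deriv φ s with hu
  set v := deriv φ (-s) with hv
  set A := φ (-s) + s * v + (b ^ 2 - s ^ 2) * deriv (deriv φ) (-s) with hAdef
  set B := φ s - s * u + (b ^ 2 - s ^ 2) * deriv (deriv φ) s with hBdef
  have key : u * A + v * B = 0 := by
    rw [hAdef, hBdef, hu, hv]
    unfold calF at hF
    linarith [hF]
  have hvne : v ≠ 0 := by
    intro h
    rw [h] at key
    have : u * A = 0 := by linarith
    rcases mul_eq_zero.1 this with h1 | h2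
    · exact hφ' h1
    · exact hA.ne' h2
  refine ⟨hvne, ?_⟩
  have h2 : u * (-v) * B = u ^ 2 * A := by linear_combination (-u) * key
  have h3 : 0 < u ^ 2 * A := mul_pos (pow_two_pos_of_ne_zero hφ') hA
  nlinarith [h2, h3, hB]
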